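/- arXiv:2106.05190 — 6 statements merged into one kernel-verified Lean document; each statement's English description precedes it below -/
import Mathlib

section
/- Fix real numbers σ11 > 0, σ22 > 0, s11, s22, s12, A, and C. For t in the open interval D = (−√(σ11·σ22), √(σ11·σ22)) define v(t) = σ22 − t²/σ11 (which is positive on D), q(t) = s22 − 2·(t/σ11)·s12 + (t²/σ11²)·s11, and η(t) = C − (A/2)·log v(t) − q(t)/(2·v(t)); define the polynomial P(t) = s12·σ11·σ22 + (σ11·σ22·A − s22·σ11 − s11·σ22)·t + s12·t² − A·t³. Then for every t ∈ D, η is differentiable at t with derivative η′(t) = P(t)/(t² − σ11·σ22)². -/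
open Real

/-- On the open interval `(−√(σ11·σ22), √(σ11·σ22))`, the profile log-likelihood `η`
of the DPER algorithm is differentiable with derivative `P(t) / (t² − σ11·σ22)²`,
where `P` is the cubic polynomial of Theorems 2 and 4. -/
theorem eta_hasDerivAt
    (σ11 σ22 s11 s22 s12 A C : ℝ) (h11 : 0 < σ11) (h22 : 0 < σ22) :
    ∀ t ∈ Set.Ioo (-Real.sqrt (σ11 * σ22)) (Real.sqrt (σ11 * σ22)),
      HasDerivAt
        (fun t : ℝ => C - A / 2 * Real.log (σ22 - t ^ 2 / σ11)
          - (s22 - 2 * (t / σ11) * s12 + t ^ 2 / σ11 ^ 2 * s11)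
            / (2 * (σ22 - t ^ 2 / σ11)))
        ((s12 * σ11 * σ22 + (σ11 * σ22 * A - s22 * σ11 - s11 * σ22) * t
            + s12 * t ^ 2 - A * t ^ 3) / (t ^ 2 - σ11 * σ22) ^ 2)
        t := by
  intro t ht
  obtain ⟨ht1, ht2⟩ := ht
  have hσ : 0 < σ11 * σ22 := mul_pos h11 h22
  have ht2' : t ^ 2 < σ11 * σ22 := by
    have habs : |t| < Real.sqrt (σ11 * σ22) := abs_lt.2 ⟨ht1, ht2⟩
    calc t ^ 2 = |t| ^ 2 := (sq_abs t).symm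
    _ < Real.sqrt (σ11 * σ22) ^ 2 := by
        exact pow_lt_pow_left₀ habs (abs_nonneg t) (by norm_num)
    _ = σ11 * σ22 := Real.sq_sqrt hσ.le
  have hv : 0 < σ22 - t ^ 2 / σ11 := by
    rw [sub_pos, div_lt_iff₀ h11]
    linarith [ht2']
  have hv' : σ22 - t ^ 2 / σ11 ≠ 0 := hv.ne'
  -- derivative of v
  have hvd : HasDerivAt (fun t : ℝ => σ22 - t ^ 2 / σ11) (-(2 * t / σ11)) t := by
    have : HasDerivAt (fun t : ℝ => t ^ 2 / σ11) (2 * t / σ11) t := by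
      simpa using ((hasDerivAt_pow 2 t).div_const σ11)
    simpa [Pi.sub_def] using (hasDerivAt_const t σ22).sub this
  -- derivative of log v
  have hlog : HasDerivAt (fun t : ℝ => Real.log (σ22 - t ^ 2 / σ11))
      (-(2 * t / σ11) / (σ22 - t ^ 2 / σ11)) t := hvd.log hv'
  -- derivative of q
  have hq : HasDerivAt (fun t : ℝ => s22 - 2 * (t / σ11) * s12 + t ^ 2 / σ11 ^ 2 * s11)
      (-(2 / σ11 * s12) + 2 * t / σ11 ^ 2 * s11) t := by
    have h1 : HasDerivAt (fun t : ℝ => 2 * (t / σ11) * s12) (2 / σ11 * s12) t := by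
      have := ((hasDerivAt_id t).div_const σ11).const_mul 2
      have h1' := this.mul_const s12
      exact h1'.congr_deriv (by ring)
    have h2 : HasDerivAt (fun t : ℝ => t ^ 2 / σ11 ^ 2 * s11) (2 * t / σ11 ^ 2 * s11) t := by
      have := ((hasDerivAt_pow 2 t).div_const (σ11 ^ 2)).mul_const s11
      simpa using this
    simpa [Pi.sub_def, Pi.add_def] using ((hasDerivAt_const t s22).sub h1).add h2
  -- derivative of q / (2 v)
  have h2v : HasDerivAt (fun t : ℝ => 2 * (σ22 - t ^ 2 / σ11)) (2 * -(2 * t / σ11)) t :=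
    hvd.const_mul 2
  have h2v' : 2 * (σ22 - t ^ 2 / σ11) ≠ 0 := by positivity
  have hquot := hq.div h2v h2v'
  have hfull := ((hasDerivAt_const t C).sub (hlog.const_mul (A / 2))).sub hquot
  refine hfull.congr_deriv ?_
  symm
  have hne : t ^ 2 - σ11 * σ22 ≠ 0 := by nlinarith
  have hw : σ11 * σ22 - t ^ 2 ≠ 0 := by nlinarith
  have hu : σ22 - t ^ 2 / σ11 = (σ11 * σ22 - t ^ 2) / σ11 := by field_simp
  rw [hu]
  rw [show (t ^ 2 - σ11 * σ22) = -(σ11 * σ22 - t ^ 2) by ring]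
  field_simp
  ring
end

section
/- Fix real numbers σ11 > 0, σ22 > 0, s11, s22, s12, A, and C. For t in the open interval D = (−√(σ11·σ22), √(σ11·σ22)) define v(t) = σ22 − t²/σ11, q(t) = s22 − 2·(t/σ11)·s12 + (t²/σ11²)·s11, and η(t) = C − (A/2)·log v(t) − q(t)/(2·v(t)); define the polynomial P(t) = s12·σ11·σ22 + (σ11·σ22·A − s22·σ11 − s11·σ22)·t + s12·t² − A·t³. Then for every t ∈ D, the derivative of η at t is zero if and only if P(t) = 0. -/
open Real

/-- On the open interval `(−√(σ11·σ22), √(σ11·σ22))`, the stationarity equation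
`dη/dσ12 = 0` for the DPER profile log-likelihood `η` is equivalent to the vanishing
of the cubic polynomial `P`. -/
theorem eta_deriv_eq_zero_iff_cubic
    (σ11 σ22 s11 s22 s12 A C : ℝ) (h11 : 0 < σ11) (h22 : 0 < σ22) :
    ∀ t ∈ Set.Ioo (-Real.sqrt (σ11 * σ22)) (Real.sqrt (σ11 * σ22)),
      (deriv (fun t : ℝ => C - A / 2 * Real.log (σ22 - t ^ 2 / σ11)
          - (s22 - 2 * (t / σ11) * s12 + t ^ 2 / σ11 ^ 2 * s11)
            / (2 * (σ22 - t ^ 2 / σ11))) t = 0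
        ↔ s12 * σ11 * σ22 + (σ11 * σ22 * A - s22 * σ11 - s11 * σ22) * t
            + s12 * t ^ 2 - A * t ^ 3 = 0) := by
  intro t ht
  obtain ⟨h1, h2⟩ := ht
  have hσσ : 0 < σ11 * σ22 := mul_pos h11 h22
  have habs : |t| < Real.sqrt (σ11 * σ22) := abs_lt.mpr ⟨h1, h2⟩
  have ht2 : t ^ 2 < σ11 * σ22 := by
    calc t ^ 2 = |t| ^ 2 := (sq_abs t).symm
      _ < Real.sqrt (σ11 * σ22) ^ 2 := by
          exact pow_lt_pow_left₀ habs (abs_nonneg t) (by norm_num)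
      _ = σ11 * σ22 := Real.sq_sqrt hσσ.le
  have hv : 0 < σ22 - t ^ 2 / σ11 := by
    rw [sub_pos, div_lt_iff₀ h11]
    nlinarith
  have hvne : σ22 - t ^ 2 / σ11 ≠ 0 := hv.ne'
  have hV : HasDerivAt (fun t : ℝ => σ22 - t ^ 2 / σ11) (-((2 * t) / σ11)) t := by
    have := ((hasDerivAt_pow 2 t).div_const σ11).const_sub σ22
    simpa using this
  have hlog : HasDerivAt (fun t : ℝ => Real.log (σ22 - t ^ 2 / σ11))
      ((-((2 * t) / σ11)) / (σ22 - t ^ 2 / σ11)) t := hV.log hvne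
  have hQ : HasDerivAt (fun t : ℝ => s22 - 2 * (t / σ11) * s12 + t ^ 2 / σ11 ^ 2 * s11)
      (-(2 * (1 / σ11) * s12) + (2 * t) / σ11 ^ 2 * s11) t := by
    have ha : HasDerivAt (fun t : ℝ => s22 - 2 * (t / σ11) * s12)
        (-(2 * (1 / σ11) * s12)) t := by
      have := (((hasDerivAt_id t).div_const σ11).const_mul 2).mul_const s12
      simpa using this.const_sub s22
    have hb : HasDerivAt (fun t : ℝ => t ^ 2 / σ11 ^ 2 * s11)
        ((2 * t) / σ11 ^ 2 * s11) t := by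
      have := ((hasDerivAt_pow 2 t).div_const (σ11 ^ 2)).mul_const s11
      simpa using this
    exact ha.add hb
  have hDen : HasDerivAt (fun t : ℝ => 2 * (σ22 - t ^ 2 / σ11)) (2 * (-((2 * t) / σ11))) t :=
    hV.const_mul 2
  have hDenne : 2 * (σ22 - t ^ 2 / σ11) ≠ 0 := by positivity
  have hDiv := hQ.div hDen hDenne
  have hF := ((hlog.const_mul (A / 2)).const_sub C).sub hDiv
  erw [hF.deriv]
  have key : ∀ v : ℝ, v ≠ 0 → σ11 * v = σ11 * σ22 - t ^ 2 →
      (-(A / 2 * (-(2 * t / σ11) / v)) -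
        ((-(2 * (1 / σ11) * s12) + 2 * t / σ11 ^ 2 * s11) * (2 * v) -
          (s22 - 2 * (t / σ11) * s12 + t ^ 2 / σ11 ^ 2 * s11) * (2 * -(2 * t / σ11))) /
          (2 * v) ^ 2 = 0
        ↔ s12 * σ11 * σ22 + (σ11 * σ22 * A - s22 * σ11 - s11 * σ22) * t
            + s12 * t ^ 2 - A * t ^ 3 = 0) := by
    intro v hv0 hveq
    have hne : σ11 ^ 2 * v ^ 2 ≠ 0 := by positivity
    rw [show -(A / 2 * (-(2 * t / σ11) / v)) -
        ((-(2 * (1 / σ11) * s12) + 2 * t / σ11 ^ 2 * s11) * (2 * v) -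
          (s22 - 2 * (t / σ11) * s12 + t ^ 2 / σ11 ^ 2 * s11) * (2 * -(2 * t / σ11))) /
          (2 * v) ^ 2
      = (s12 * σ11 * σ22 + (σ11 * σ22 * A - s22 * σ11 - s11 * σ22) * t
            + s12 * t ^ 2 - A * t ^ 3) / (σ11 ^ 2 * v ^ 2) from by
      rw [eq_div_iff hne]
      field_simp
      linear_combination (A * t * σ11 - t * s11 + s12 * σ11) * hveq]
    rw [div_eq_zero_iff]
    simp [hne]
  exact key _ hvne (by field_simp [mul_comm])
end

section
/- Fix real numbers σ11 > 0, σ22 > 0, s11 ≥ 0, s22 ≥ 0, s12 with s12² ≤ s11·s22, and A > 0, and assume the nondegeneracy condition (★): s12 ≠ (s22·σ11 + s11·σ22)/(2√(σ11·σ22)) and s12 ≠ −(s22·σ11 + s11·σ22)/(2√(σ11·σ22)). For t in D = (−√(σ11·σ22), √(σ11·σ22)) define φ(t) = −(A/2)·log(σ22 − t²/σ11) and ψ(t) = (s22 − 2·(t/σ11)·s12 + (t²/σ11²)·s11)/(2·(σ22 − t²/σ11)). Then the ratio (−ψ(t))/φ(t) tends to −∞ as t tends to √(σ11·σ22) from the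 left, and tends to −∞ as t tends to −√(σ11·σ22) from the right. -/
open Real Filter Topology

/-- `(x * log x)⁻¹ → -∞` as `x → 0⁺`. -/
lemma inv_mul_log_tendsto_atBot :
    Tendsto (fun x : ℝ => (x * Real.log x)⁻¹) (nhdsWithin 0 (Set.Ioi 0)) atBot := by
  have h0 : Tendsto (fun x : ℝ => -(x * Real.log x)) (nhdsWithin 0 (Set.Ioi 0)) (𝓝 0) := by
    have := tendsto_log_mul_rpow_nhdsGT_zero (r := 1) zero_lt_one
    simp only [Real.rpow_one] at this
    have h' : Tendsto (fun x : ℝ => x * Real.log x) (nhdsWithin 0 (Set.Ioi 0)) (𝓝 0) := by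
      refine this.congr (fun x => mul_comm _ _)
    simpa using h'.neg
  have hpos : ∀ᶠ x in nhdsWithin (0:ℝ) (Set.Ioi 0), 0 < -(x * Real.log x) := by
    have h1 : ∀ᶠ x in nhdsWithin (0:ℝ) (Set.Ioi 0), x < 1 := by
      refine (tendsto_id.mono_left nhdsWithin_le_nhds).eventually_lt_const one_pos
    filter_upwards [h1, self_mem_nhdsWithin] with x hx1 hx0
    have hlog : Real.log x < 0 := Real.log_neg hx0 hx1
    have : x * Real.log x < 0 := mul_neg_of_pos_of_neg hx0 hlog
    linarith
  have h0' : Tendsto (fun x : ℝ => -(x * Real.log x)) (nhdsWithin 0 (Set.Ioi 0))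
      (nhdsWithin 0 (Set.Ioi 0)) := by
    rw [tendsto_nhdsWithin_iff]
    exact ⟨h0, hpos⟩
  have hinv : Tendsto (fun x : ℝ => (-(x * Real.log x))⁻¹) (nhdsWithin 0 (Set.Ioi 0)) atTop :=
    tendsto_inv_nhdsGT_zero.comp h0'
  have hneg : Tendsto (fun x : ℝ => -(-(x * Real.log x))⁻¹) (nhdsWithin 0 (Set.Ioi 0)) atBot :=
    tendsto_neg_atTop_atBot.comp hinv
  refine hneg.congr (fun x => ?_)
  rw [neg_inv, neg_neg]

/-- Generic boundary lemma used for both endpoints. -/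
lemma helper_tendsto (σ11 σ22 s11 s22 s12 A : ℝ) (h11 : 0 < σ11) (hA : 0 < A)
    (c : ℝ) (hc2 : c ^ 2 = σ11 * σ22)
    (hN : 0 < s22 - 2 * (c / σ11) * s12 + c ^ 2 / σ11 ^ 2 * s11)
    (l : Filter ℝ) (hl : Tendsto id l (𝓝 c)) (hev : ∀ᶠ t in l, t ^ 2 < σ11 * σ22) :
    Tendsto (fun t : ℝ =>
        (-((s22 - 2 * (t / σ11) * s12 + t ^ 2 / σ11 ^ 2 * s11)
            / (2 * (σ22 - t ^ 2 / σ11))))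
          / (-(A / 2) * Real.log (σ22 - t ^ 2 / σ11))) l atBot := by
  set N : ℝ → ℝ := fun t => s22 - 2 * (t / σ11) * s12 + t ^ 2 / σ11 ^ 2 * s11 with hNdef
  set u : ℝ → ℝ := fun t => σ22 - t ^ 2 / σ11 with hudef
  have hu0 : Tendsto u l (𝓝 0) := by
    have hcont : Continuous u := by fun_prop
    have : Tendsto u l (𝓝 (u c)) := (hcont.tendsto c).comp hl
    have huc : u c = 0 := by
      simp only [hudef, hc2]
      field_simp
      ring
    rwa [huc] at this
  have hupos : ∀ᶠ t in l, 0 < u t := by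
    filter_upwards [hev] with t ht
    have : t ^ 2 / σ11 < σ22 := by
      rw [div_lt_iff₀ h11]
      linarith [ht]
    simp only [hudef]
    linarith
  have huw : Tendsto u l (nhdsWithin 0 (Set.Ioi 0)) := by
    rw [tendsto_nhdsWithin_iff]; exact ⟨hu0, hupos⟩
  have hinv : Tendsto (fun t => (u t * Real.log (u t))⁻¹) l atBot :=
    inv_mul_log_tendsto_atBot.comp huw
  have hNlim : Tendsto (fun t => N t / A) l (𝓝 (N c / A)) := by
    have hcont : Continuous fun t => N t / A := by fun_prop
    exact (hcont.tendsto c).comp hl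
  have hNpos : 0 < N c / A := div_pos hN hA
  have hmul : Tendsto (fun t => N t / A * (u t * Real.log (u t))⁻¹) l atBot :=
    hNlim.pos_mul_atBot hNpos hinv
  refine hmul.congr' ?_
  have hult1 : ∀ᶠ t in l, u t < 1 := hu0.eventually_lt_const one_pos
  filter_upwards [hupos, hult1] with t h0 h1
  have hlog : Real.log (u t) < 0 := Real.log_neg h0 h1
  have hune : u t ≠ 0 := ne_of_gt h0
  have hlogne : Real.log (u t) ≠ 0 := ne_of_lt hlog
  show N t / A * (u t * Real.log (u t))⁻¹
      = -(N t / (2 * u t)) / (-(A / 2) * Real.log (u t))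
  field_simp

lemma Nc_pos (σ11 σ22 s11 s22 s12 : ℝ) (h11 : 0 < σ11) (h22 : 0 < σ22)
    (hs11 : 0 ≤ s11) (hs22 : 0 ≤ s22) (hcs : s12 ^ 2 ≤ s11 * s22)
    (c : ℝ) (hc : c ≠ 0) (hc2 : c ^ 2 = σ11 * σ22)
    (hstar : s12 ≠ (s22 * σ11 + s11 * σ22) / (2 * c)) :
    0 < s22 - 2 * (c / σ11) * s12 + c ^ 2 / σ11 ^ 2 * s11 := by
  have hσ11 : σ11 ≠ 0 := ne_of_gt h11
  have hxx : c ^ 2 / σ11 ^ 2 = (c / σ11) ^ 2 := (div_pow c σ11 2).symm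
  rw [hxx]
  set x : ℝ := c / σ11 with hx
  have hNnonneg : 0 ≤ s22 - 2 * x * s12 + x ^ 2 * s11 := by
    rcases eq_or_lt_of_le hs11 with h | h
    · have hs12 : s12 = 0 := by
        have : s12 ^ 2 ≤ 0 := by rw [← h] at hcs; simpa using hcs
        exact pow_eq_zero_iff (n := 2) (by norm_num) |>.mp
          (le_antisymm this (sq_nonneg _))
      rw [hs12, ← h]
      simpa using hs22
    · nlinarith [sq_nonneg (s11 * x - s12), h]
  have hNne : s22 - 2 * x * s12 + x ^ 2 * s11 ≠ 0 := by
    intro h0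
    apply hstar
    rw [hx] at h0
    have h0' : 2 * c * σ11 * s12 = s22 * σ11 ^ 2 + c ^ 2 * s11 := by
      field_simp at h0
      nlinarith [h0]
    rw [hc2] at h0'
    rw [eq_div_iff (by simpa using hc : (2 : ℝ) * c ≠ 0)]
    apply mul_left_cancel₀ hσ11
    linear_combination h0'
  have key : 0 < s22 - 2 * x * s12 + x ^ 2 * s11 := lt_of_le_of_ne hNnonneg (Ne.symm hNne)
  linarith

/-- The ratio `(−ψ)/φ` of the quadratic-over-variance term to the log-variance term of
the DPER profile log-likelihood tends to `−∞` at both endpoints of the interval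
`(−√(σ11·σ22), √(σ11·σ22))`, under the nondegeneracy condition (★) and `A > 0`. -/
theorem neg_psi_div_phi_tendsto_atBot_boundary
    (σ11 σ22 s11 s22 s12 A : ℝ) (h11 : 0 < σ11) (h22 : 0 < σ22)
    (hs11 : 0 ≤ s11) (hs22 : 0 ≤ s22) (hcs : s12 ^ 2 ≤ s11 * s22) (hA : 0 < A)
    (hstar1 : s12 ≠ (s22 * σ11 + s11 * σ22) / (2 * Real.sqrt (σ11 * σ22)))
    (hstar2 : s12 ≠ -((s22 * σ11 + s11 * σ22) / (2 * Real.sqrt (σ11 * σ22)))) :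
    Tendsto (fun t : ℝ =>
        (-((s22 - 2 * (t / σ11) * s12 + t ^ 2 / σ11 ^ 2 * s11)
            / (2 * (σ22 - t ^ 2 / σ11))))
          / (-(A / 2) * Real.log (σ22 - t ^ 2 / σ11)))
      (nhdsWithin (Real.sqrt (σ11 * σ22)) (Set.Iio (Real.sqrt (σ11 * σ22)))) atBot ∧
    Tendsto (fun t : ℝ =>
        (-((s22 - 2 * (t / σ11) * s12 + t ^ 2 / σ11 ^ 2 * s11)
            / (2 * (σ22 - t ^ 2 / σ11))))
          / (-(A / 2) * Real.log (σ22 - t ^ 2 / σ11)))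
      (nhdsWithin (-Real.sqrt (σ11 * σ22)) (Set.Ioi (-Real.sqrt (σ11 * σ22)))) atBot := by
  set r := Real.sqrt (σ11 * σ22) with hr
  have hr0 : 0 < r := Real.sqrt_pos.mpr (mul_pos h11 h22)
  have hr2 : r ^ 2 = σ11 * σ22 := Real.sq_sqrt (mul_pos h11 h22).le
  constructor
  · apply helper_tendsto σ11 σ22 s11 s22 s12 A h11 hA r hr2
    · exact Nc_pos σ11 σ22 s11 s22 s12 h11 h22 hs11 hs22 hcs r (ne_of_gt hr0) hr2 hstar1
    · exact tendsto_id.mono_left nhdsWithin_le_nhds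
    · have h1 : ∀ᶠ t in nhdsWithin r (Set.Iio r), -r < t :=
        eventually_nhdsWithin_of_eventually_nhds (eventually_gt_nhds (by linarith))
      filter_upwards [h1, self_mem_nhdsWithin] with t ht1 ht2
      have := sq_lt_sq' ht1 ht2
      rwa [hr2] at this
  · apply helper_tendsto σ11 σ22 s11 s22 s12 A h11 hA (-r) (by rw [neg_sq]; exact hr2)
    · have hstar : s12 ≠ (s22 * σ11 + s11 * σ22) / (2 * (-r)) := by
        intro h
        apply hstar2
        rw [h]
        field_simp
      exact Nc_pos σ11 σ22 s11 s22 s12 h11 h22 hs11 hs22 hcs (-r) (by simpa using ne_of_gt hr0)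
        (by rw [neg_sq]; exact hr2) hstar
    · exact tendsto_id.mono_left nhdsWithin_le_nhds
    · have h1 : ∀ᶠ t in nhdsWithin (-r) (Set.Ioi (-r)), t < r :=
        eventually_nhdsWithin_of_eventually_nhds (eventually_lt_nhds (by linarith))
      filter_upwards [h1, self_mem_nhdsWithin] with t ht1 ht2
      have := sq_lt_sq' ht2 ht1
      rwa [hr2] at this
end

section
/- Fix real numbers σ11 > 0, σ22 > 0, s11 ≥ 0, s22 ≥ 0, s12 with s12² ≤ s11·s22, A ≥ 0, and C, and assume the nondegeneracy condition (★): s12 ≠ (s22·σ11 + s11·σ22)/(2√(σ11·σ22)) and s12 ≠ −(s22·σ11 + s11·σ22)/(2√(σ11·σ22)). Define η(t) = C − (A/2)·log(σ22 − t²/σ11) − (s22 − 2·(t/σ11)·s12 + (t²/σ11²)·s11)/(2·(σ22 − t²/σ11)) for t in D = (−√(σ11·σ22), √(σ11·σ22)). Then η(t) tends to −∞ as t tends to √(σ11·σ22) from the left, and η(t) tends to −∞ as t tends to −√(σ11·σ22) from the right. -/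
open Real Filter

/-- Key analytic lemma: if `f → 0⁺` and `N → L > 0` along `l`, then
`C - A/2 * log (f t) - N t / (2 * f t) → -∞`. -/
lemma eta_key {l : Filter ℝ} {f N : ℝ → ℝ} {L A C : ℝ} (hL : 0 < L)
    (hf : Tendsto f l (nhdsWithin 0 (Set.Ioi 0))) (hN : Tendsto N l (nhds L)) :
    Tendsto (fun t => C - A / 2 * Real.log (f t) - N t / (2 * f t)) l atBot := by
  have hxlog : Tendsto (fun x : ℝ => x * Real.log x) (nhdsWithin 0 (Set.Ioi 0)) (nhds 0) := by
    have := tendsto_log_mul_rpow_nhdsGT_zero (zero_lt_one)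
    simpa [Real.rpow_one, mul_comm] using this
  have h1 : Tendsto (fun t => f t * Real.log (f t)) l (nhds 0) := hxlog.comp hf
  have h2 : Tendsto (fun t => A / 2 * (f t * Real.log (f t)) + N t / 2) l (nhds (L / 2)) := by
    have := ((h1.const_mul (A / 2)).add (hN.div_const 2))
    simpa using this
  have h3 : Tendsto (fun t => (f t)⁻¹) l atTop :=
    tendsto_inv_nhdsGT_zero.comp hf
  have h4 : Tendsto (fun t => (A / 2 * (f t * Real.log (f t)) + N t / 2) * (f t)⁻¹) l atTop :=
    Tendsto.pos_mul_atTop (by positivity) h2 h3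
  have h5 : Tendsto (fun t => C + -((A / 2 * (f t * Real.log (f t)) + N t / 2) * (f t)⁻¹))
      l atBot := tendsto_atBot_add_const_left l C (tendsto_neg_atTop_atBot.comp h4)
  refine h5.congr' ?_
  have hpos : ∀ᶠ t in l, f t ∈ Set.Ioi (0 : ℝ) := hf self_mem_nhdsWithin
  filter_upwards [hpos] with t ht
  have hft : f t ≠ 0 := ne_of_gt ht
  field_simp
  ring

/-- The DPER profile log-likelihood `η` tends to `−∞` at both endpoints of the interval
`(−√(σ11·σ22), √(σ11·σ22))`, under the nondegeneracy condition (★). -/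
theorem eta_tendsto_atBot_boundary
    (σ11 σ22 s11 s22 s12 A C : ℝ) (h11 : 0 < σ11) (h22 : 0 < σ22)
    (hs11 : 0 ≤ s11) (hs22 : 0 ≤ s22) (hcs : s12 ^ 2 ≤ s11 * s22) (hA : 0 ≤ A)
    (hstar1 : s12 ≠ (s22 * σ11 + s11 * σ22) / (2 * Real.sqrt (σ11 * σ22)))
    (hstar2 : s12 ≠ -((s22 * σ11 + s11 * σ22) / (2 * Real.sqrt (σ11 * σ22)))) :
    Tendsto (fun t : ℝ => C - A / 2 * Real.log (σ22 - t ^ 2 / σ11)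
        - (s22 - 2 * (t / σ11) * s12 + t ^ 2 / σ11 ^ 2 * s11)
          / (2 * (σ22 - t ^ 2 / σ11)))
      (nhdsWithin (Real.sqrt (σ11 * σ22)) (Set.Iio (Real.sqrt (σ11 * σ22)))) atBot ∧
    Tendsto (fun t : ℝ => C - A / 2 * Real.log (σ22 - t ^ 2 / σ11)
        - (s22 - 2 * (t / σ11) * s12 + t ^ 2 / σ11 ^ 2 * s11)
          / (2 * (σ22 - t ^ 2 / σ11)))
      (nhdsWithin (-Real.sqrt (σ11 * σ22)) (Set.Ioi (-Real.sqrt (σ11 * σ22)))) atBot := by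
  set r := Real.sqrt (σ11 * σ22) with hr
  have hprod : (0:ℝ) < σ11 * σ22 := mul_pos h11 h22
  have hrpos : 0 < r := Real.sqrt_pos.mpr hprod
  have hr2 : r ^ 2 = σ11 * σ22 := Real.sq_sqrt hprod.le
  -- basic bound: 2 * r * s12 and -2 * r * s12 are both ≤ s22*σ11 + s11*σ22, strictly by (★)
  have habs : 2 * r * |s12| ≤ s22 * σ11 + s11 * σ22 := by
    have h1 : r * |s12| = Real.sqrt ((σ11 * σ22) * s12 ^ 2) := by
      rw [Real.sqrt_mul hprod.le, Real.sqrt_sq_eq_abs]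
    have h2 : Real.sqrt ((σ11 * σ22) * s12 ^ 2) ≤ Real.sqrt ((σ11 * s22) * (σ22 * s11)) := by
      apply Real.sqrt_le_sqrt
      nlinarith [mul_le_mul_of_nonneg_left hcs hprod.le]
    have h3 : Real.sqrt ((σ11 * s22) * (σ22 * s11)) =
        Real.sqrt (σ11 * s22) * Real.sqrt (σ22 * s11) :=
      Real.sqrt_mul (by positivity) _
    have h4 : 2 * (Real.sqrt (σ11 * s22) * Real.sqrt (σ22 * s11)) ≤
        Real.sqrt (σ11 * s22) ^ 2 + Real.sqrt (σ22 * s11) ^ 2 := by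
      nlinarith [two_mul_le_add_sq (Real.sqrt (σ11 * s22)) (Real.sqrt (σ22 * s11))]
    rw [Real.sq_sqrt (by positivity), Real.sq_sqrt (by positivity)] at h4
    nlinarith [h1, h2, h3, h4]
  have h2r : (2 : ℝ) * r ≠ 0 := by positivity
  have hne1 : 2 * r * s12 ≠ s22 * σ11 + s11 * σ22 := by
    intro h
    apply hstar1
    field_simp
    linarith [h]
  have hne2 : -(2 * r * s12) ≠ s22 * σ11 + s11 * σ22 := by
    intro h
    apply hstar2
    field_simp
    linarith [h]
  have hlt1 : 2 * r * s12 < s22 * σ11 + s11 * σ22 :=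
    lt_of_le_of_ne (le_trans (by nlinarith [le_abs_self s12, hrpos.le]) habs) hne1
  have hlt2 : -(2 * r * s12) < s22 * σ11 + s11 * σ22 :=
    lt_of_le_of_ne (le_trans (by nlinarith [neg_abs_le s12, hrpos.le]) habs) hne2
  -- the numerator function N and denominator f
  set N : ℝ → ℝ := fun t => s22 - 2 * (t / σ11) * s12 + t ^ 2 / σ11 ^ 2 * s11 with hN
  set f : ℝ → ℝ := fun t => σ22 - t ^ 2 / σ11 with hf
  have hNcont : Continuous N := by fun_prop
  have hfcont : Continuous f := by fun_prop
  have hf0 : ∀ c : ℝ, c ^ 2 = σ11 * σ22 → f c = 0 := by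
    intro c hc
    simp only [hf, hc]
    field_simp
    ring
  have hN_pos : ∀ c : ℝ, c ^ 2 = σ11 * σ22 → 2 * c * s12 < s22 * σ11 + s11 * σ22 → 0 < N c := by
    intro c hc hlt
    simp only [hN]
    have heq : s22 - 2 * (c / σ11) * s12 + c ^ 2 / σ11 ^ 2 * s11
        = (σ11 * (s22 * σ11 + s11 * σ22 - 2 * c * s12)) / σ11 ^ 2 := by
      field_simp
      linear_combination s11 * hc
    rw [heq]
    exact div_pos (mul_pos h11 (by linarith)) (by positivity)
  -- generic endpoint argument
  have main : ∀ c : ℝ, c ^ 2 = σ11 * σ22 → ∀ l : Filter ℝ, Tendsto id l (nhds c) →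
      (∀ᶠ t in l, t ^ 2 < σ11 * σ22) → 0 < N c →
      Tendsto (fun t : ℝ => C - A / 2 * Real.log (f t) - N t / (2 * f t)) l atBot := by
    intro c hc l hl hev hNc
    apply eta_key hNc
    · apply tendsto_nhdsWithin_of_tendsto_nhds_of_eventually_within
      · have : Tendsto f l (nhds (f c)) := (hfcont.tendsto c).comp hl
        rwa [hf0 c hc] at this
      · filter_upwards [hev] with t ht
        simp only [hf, Set.mem_Ioi, sub_pos]
        rw [div_lt_iff₀ h11]
        nlinarith
    · exact (hNcont.tendsto c).comp hl
  have hsq : ∀ c : ℝ, c ^ 2 = σ11 * σ22 → ∀ t : ℝ, -|c| < t → t < |c| → t ^ 2 < σ11 * σ22 := by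
    intro c hc t h1 h2
    have : t ^ 2 < |c| ^ 2 := by nlinarith [abs_nonneg c]
    rwa [sq_abs, hc] at this
  have habsr : |r| = r := abs_of_pos hrpos
  constructor
  · refine main r hr2 _ (tendsto_id.mono_left nhdsWithin_le_nhds) ?_ ?_
    · have h1 : ∀ᶠ t in nhdsWithin r (Set.Iio r), -r < t :=
        (eventually_gt_nhds (by linarith)).filter_mono nhdsWithin_le_nhds
      have h2 : ∀ᶠ t in nhdsWithin r (Set.Iio r), t < r := self_mem_nhdsWithin
      filter_upwards [h1, h2] with t ht1 ht2
      exact hsq r hr2 t (by rwa [habsr]) (by rwa [habsr])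
    · exact hN_pos r hr2 hlt1
  · have hc2 : (-r) ^ 2 = σ11 * σ22 := by rw [neg_pow]; simpa using hr2
    refine main (-r) hc2 _ (tendsto_id.mono_left nhdsWithin_le_nhds) ?_ ?_
    · have h1 : ∀ᶠ t in nhdsWithin (-r) (Set.Ioi (-r)), t < r :=
        (eventually_lt_nhds (by linarith)).filter_mono nhdsWithin_le_nhds
      have h2 : ∀ᶠ t in nhdsWithin (-r) (Set.Ioi (-r)), -r < t := self_mem_nhdsWithin
      filter_upwards [h1, h2] with t ht1 ht2
      have habsc : |(-r)| = r := by rw [abs_neg, habsr]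
      exact hsq (-r) hc2 t (by rwa [habsc]) (by rwa [habsc])
    · apply hN_pos (-r) hc2
      nlinarith
end

section
/- Fix real numbers σ11 > 0, σ22 > 0, s11 ≥ 0, s22 ≥ 0, s12 with s12² ≤ s11·s22, A ≥ 0, and C, and assume the nondegeneracy condition (★): s12 ≠ (s22·σ11 + s11·σ22)/(2√(σ11·σ22)) and s12 ≠ −(s22·σ11 + s11·σ22)/(2√(σ11·σ22)). Define η(t) = C − (A/2)·log(σ22 − t²/σ11) − (s22 − 2·(t/σ11)·s12 + (t²/σ11²)·s11)/(2·(σ22 − t²/σ11)) for t in D = (−√(σ11·σ22), √(σ11·σ22)), and define the polynomial P(t) = s12·σ11·σ22 + (σ11·σ22·A − s22·σ11 − s11·σ22)·t + s12·t² − A·t³. Then there exists t* ∈ D such that η(t) ≤ η(t*) for all t ∈ D, and every such global maximum point t* satisfies P(t*) = 0. -/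
open Real

open Filter

noncomputable def eta (σ11 σ22 s11 s22 s12 A C t : ℝ) : ℝ :=
  C - A / 2 * Real.log (σ22 - t ^ 2 / σ11)
    - (s22 - 2 * (t / σ11) * s12 + t ^ 2 / σ11 ^ 2 * s11) / (2 * (σ22 - t ^ 2 / σ11))

lemma quad_nonneg {a b c x : ℝ} (ha : 0 ≤ a) (hc : 0 ≤ c) (h : b ^ 2 ≤ a * c) :
    0 ≤ c - 2 * x * b + x ^ 2 * a := by
  rcases eq_or_lt_of_le ha with h0 | h0
  · have hb : b = 0 := by nlinarith [sq_nonneg b]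
    subst hb
    nlinarith [sq_nonneg x]
  · nlinarith [sq_nonneg (a * x - b)]

lemma tendsto_eta_aux (u Q : ℝ → ℝ) (s : Set ℝ) (c A C : ℝ)
    (hu : ContinuousAt u c) (huc : u c = 0) (hupos : ∀ t ∈ s, 0 < u t)
    (hQ : ContinuousAt Q c) (hQc : 0 < Q c) :
    Tendsto (fun t => C - A / 2 * Real.log (u t) - Q t / (2 * u t)) (nhdsWithin c s) atBot := by
  have hmem : ∀ᶠ t in nhdsWithin c s, t ∈ s := eventually_mem_nhdsWithin
  have hu0 : Tendsto u (nhdsWithin c s) (nhds 0) := by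
    have := hu.continuousWithinAt (s := s)
    rwa [ContinuousWithinAt, huc] at this
  have h2u : Tendsto (fun t => 2 * u t) (nhdsWithin c s) (nhdsWithin 0 (Set.Ioi 0)) := by
    rw [tendsto_nhdsWithin_iff]
    refine ⟨by simpa using hu0.const_mul 2, hmem.mono fun t ht => ?_⟩
    have := hupos t ht
    simp only [Set.mem_Ioi]
    linarith
  have hinv : Tendsto (fun t => (2 * u t)⁻¹) (nhdsWithin c s) atTop :=
    tendsto_inv_nhdsGT_zero.comp h2u
  have hxlog : Tendsto (fun t => u t * Real.log (u t)) (nhdsWithin c s) (nhds 0) := by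
    have := (Real.continuous_mul_log.tendsto 0).comp hu0
    simpa [Function.comp_def] using this
  have hnum : Tendsto (fun t => A * (u t * Real.log (u t)) + Q t) (nhdsWithin c s) (nhds (Q c)) := by
    have := (hxlog.const_mul A).add (hQ.continuousWithinAt (s := s))
    simpa using this
  have hprod : Tendsto (fun t => (A * (u t * Real.log (u t)) + Q t) * (2 * u t)⁻¹)
      (nhdsWithin c s) atTop := hnum.pos_mul_atTop hQc hinv
  have hfinal : Tendsto (fun t => C - (A * (u t * Real.log (u t)) + Q t) * (2 * u t)⁻¹)
      (nhdsWithin c s) atBot := by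
    have := tendsto_atBot_add_const_left (nhdsWithin c s) C
      (tendsto_neg_atTop_atBot.comp hprod)
    simpa [sub_eq_add_neg, Function.comp] using this
  refine hfinal.congr' (hmem.mono fun t ht => ?_)
  have h := hupos t ht
  have hne : u t ≠ 0 := ne_of_gt h
  field_simp
  ring

set_option maxHeartbeats 1000000 in
theorem eta_exists_max (σ11 σ22 s11 s22 s12 A C : ℝ) (h11 : 0 < σ11) (h22 : 0 < σ22)
    (hs11 : 0 ≤ s11) (hs22 : 0 ≤ s22) (hcs : s12 ^ 2 ≤ s11 * s22) (hA : 0 ≤ A)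
    (hstar1 : s12 ≠ (s22 * σ11 + s11 * σ22) / (2 * Real.sqrt (σ11 * σ22)))
    (hstar2 : s12 ≠ -((s22 * σ11 + s11 * σ22) / (2 * Real.sqrt (σ11 * σ22)))) :
    ∃ tstar ∈ Set.Ioo (-Real.sqrt (σ11 * σ22)) (Real.sqrt (σ11 * σ22)),
      ∀ t ∈ Set.Ioo (-Real.sqrt (σ11 * σ22)) (Real.sqrt (σ11 * σ22)),
        eta σ11 σ22 s11 s22 s12 A C t ≤ eta σ11 σ22 s11 s22 s12 A C tstar := by
  have hσ : 0 < σ11 * σ22 := mul_pos h11 h22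
  set b := Real.sqrt (σ11 * σ22) with hbdef
  have hb : 0 < b := Real.sqrt_pos.mpr hσ
  have hb2 : b ^ 2 = σ11 * σ22 := Real.sq_sqrt hσ.le
  set u : ℝ → ℝ := fun t => σ22 - t ^ 2 / σ11 with hudef
  set Q : ℝ → ℝ := fun t => s22 - 2 * (t / σ11) * s12 + t ^ 2 / σ11 ^ 2 * s11 with hQdef
  have hu_pos : ∀ t ∈ Set.Ioo (-b) b, 0 < u t := by
    intro t ht
    have h1 : t ^ 2 < b ^ 2 := sq_lt_sq' ht.1 ht.2
    rw [hb2] at h1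
    have : t ^ 2 / σ11 < σ22 := by
      rw [div_lt_iff₀ h11]; linarith [h1]
    simpa [hudef] using sub_pos.mpr this
  have hQ_nonneg : ∀ t, 0 ≤ Q t := by
    intro t
    have h := quad_nonneg (x := t / σ11) hs11 hs22 hcs
    have ht2 : (t / σ11) ^ 2 = t ^ 2 / σ11 ^ 2 := div_pow t σ11 2
    simp only [hQdef]
    rw [← ht2]
    linarith [h]
  have hu_cont : Continuous u := by
    simp only [hudef]; continuity
  have hQ_cont : Continuous Q := by
    simp only [hQdef]; continuity
  have hub : u b = 0 := by
    simp only [hudef, hb2]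
    field_simp
    ring
  have hunb : u (-b) = 0 := by
    simp only [hudef]
    rw [show (-b:ℝ) ^ 2 = b ^ 2 by ring, hb2]
    field_simp
    ring
  have hQb : 0 < Q b := by
    refine (hQ_nonneg b).lt_of_ne fun h => hstar1 ?_
    have h' : s22 - 2 * (b / σ11) * s12 + b ^ 2 / σ11 ^ 2 * s11 = 0 := h.symm
    have hrw : s22 - 2 * (b / σ11) * s12 + b ^ 2 / σ11 ^ 2 * s11
        = (s22 * σ11 + s11 * σ22 - 2 * b * s12) / σ11 := by
      rw [hb2]; field_simp; ring
    rw [hrw, div_eq_zero_iff] at h'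
    have hnum : s22 * σ11 + s11 * σ22 - 2 * b * s12 = 0 :=
      h'.resolve_right (ne_of_gt h11)
    rw [eq_div_iff (by positivity : (2:ℝ) * Real.sqrt (σ11 * σ22) ≠ 0)]
    rw [← hbdef]
    linear_combination -hnum
  have hQnb : 0 < Q (-b) := by
    refine (hQ_nonneg (-b)).lt_of_ne fun h => hstar2 ?_
    have h' : s22 - 2 * (-b / σ11) * s12 + (-b) ^ 2 / σ11 ^ 2 * s11 = 0 := h.symm
    have hrw : s22 - 2 * (-b / σ11) * s12 + (-b) ^ 2 / σ11 ^ 2 * s11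
        = (s22 * σ11 + s11 * σ22 + 2 * b * s12) / σ11 := by
      rw [show (-b:ℝ) ^ 2 = b ^ 2 by ring, hb2]; field_simp; ring
    rw [hrw, div_eq_zero_iff] at h'
    have hnum : s22 * σ11 + s11 * σ22 + 2 * b * s12 = 0 :=
      h'.resolve_right (ne_of_gt h11)
    rw [eq_comm, neg_eq_iff_eq_neg, eq_comm,
      eq_div_iff (ne_of_gt (mul_pos two_pos hb))]
    linear_combination -hnum
  -- coercivity at the two endpoints
  have htb : Tendsto (eta σ11 σ22 s11 s22 s12 A C) (nhdsWithin b (Set.Ioo (-b) b)) atBot :=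
    tendsto_eta_aux u Q _ b A C hu_cont.continuousAt hub hu_pos hQ_cont.continuousAt hQb
  have htnb : Tendsto (eta σ11 σ22 s11 s22 s12 A C) (nhdsWithin (-b) (Set.Ioo (-b) b)) atBot :=
    tendsto_eta_aux u Q _ (-b) A C hu_cont.continuousAt hunb hu_pos hQ_cont.continuousAt hQnb
  set f := eta σ11 σ22 s11 s22 s12 A C with hfdef
  have h1 : ∀ᶠ t in nhdsWithin b (Set.Ioo (-b) b), f t < f 0 :=
    htb.eventually_lt_atBot (f 0)
  have h2 : ∀ᶠ t in nhdsWithin (-b) (Set.Ioo (-b) b), f t < f 0 :=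
    htnb.eventually_lt_atBot (f 0)
  rw [Filter.eventually_iff, Metric.mem_nhdsWithin_iff] at h1 h2
  obtain ⟨ε1, hε1, hsub1⟩ := h1
  obtain ⟨ε2, hε2, hsub2⟩ := h2
  set δ := min (min ε1 ε2) b / 2 with hδdef
  have hδ : 0 < δ := by positivity
  have hδb : δ < b := by
    have : min (min ε1 ε2) b ≤ b := min_le_right _ _
    simp only [hδdef]; linarith
  have hδε1 : δ < ε1 := by
    have h3 : min (min ε1 ε2) b ≤ ε1 := le_trans (min_le_left _ _) (min_le_left _ _)
    simp only [hδdef]; linarith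
  have hδε2 : δ < ε2 := by
    have h3 : min (min ε1 ε2) b ≤ ε2 := le_trans (min_le_left _ _) (min_le_right _ _)
    simp only [hδdef]; linarith
  set K := Set.Icc (-(b - δ)) (b - δ) with hKdef
  have hKsub : K ⊆ Set.Ioo (-b) b := by
    intro t ht
    exact ⟨by linarith [ht.1], by linarith [ht.2]⟩
  have h0K : (0:ℝ) ∈ K := by
    simp only [hKdef, Set.mem_Icc]
    constructor <;> linarith
  have hcontK : ContinuousOn f K := by
    intro t ht
    have hne : u t ≠ 0 := ne_of_gt (hu_pos t (hKsub ht))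
    apply ContinuousAt.continuousWithinAt
    show ContinuousAt (fun t => C - A / 2 * Real.log (u t) - Q t / (2 * u t)) t
    have hlog : ContinuousAt (fun t => Real.log (u t)) t :=
      ContinuousAt.log hu_cont.continuousAt hne
    have hden : (fun t => 2 * u t) t ≠ 0 := by
      simpa using mul_ne_zero two_ne_zero hne
    exact (continuousAt_const.sub (hlog.const_mul (A/2))).sub
      (hQ_cont.continuousAt.div ((continuous_const.mul hu_cont).continuousAt) hden)
  obtain ⟨tstar, htstarK, hmax⟩ := isCompact_Icc.exists_isMaxOn ⟨0, h0K⟩ hcontK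
  refine ⟨tstar, hKsub htstarK, fun t ht => ?_⟩
  by_cases htK : t ∈ K
  · exact hmax htK
  · have hlt : f t < f 0 := by
      simp only [hKdef, Set.mem_Icc, not_and_or, not_le] at htK
      rcases htK with h | h
      · -- t < -(b - δ) : close to -b
        apply hsub2
        refine ⟨?_, ht⟩
        rw [Metric.mem_ball, Real.dist_eq]
        rw [abs_lt]
        constructor
        · linarith [ht.1]
        · linarith [h, hδε2]
      · -- b - δ < t : close to b
        apply hsub1
        refine ⟨?_, ht⟩
        rw [Metric.mem_ball, Real.dist_eq]
        rw [abs_lt]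
        constructor
        · linarith [h, hδε1]
        · linarith [ht.2]
    exact le_of_lt (lt_of_lt_of_le hlt (hmax h0K))

set_option maxHeartbeats 1000000 in
theorem eta_max_root (σ11 σ22 s11 s22 s12 A C : ℝ) (h11 : 0 < σ11) (h22 : 0 < σ22) :
    ∀ tstar ∈ Set.Ioo (-Real.sqrt (σ11 * σ22)) (Real.sqrt (σ11 * σ22)),
      (∀ t ∈ Set.Ioo (-Real.sqrt (σ11 * σ22)) (Real.sqrt (σ11 * σ22)),
        eta σ11 σ22 s11 s22 s12 A C t ≤ eta σ11 σ22 s11 s22 s12 A C tstar) →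
      s12 * σ11 * σ22 + (σ11 * σ22 * A - s22 * σ11 - s11 * σ22) * tstar
          + s12 * tstar ^ 2 - A * tstar ^ 3 = 0 := by
  intro t0 ht0 hmax
  have hσ : 0 < σ11 * σ22 := mul_pos h11 h22
  have hb2 : Real.sqrt (σ11 * σ22) ^ 2 = σ11 * σ22 := Real.sq_sqrt hσ.le
  have ht2 : t0 ^ 2 < σ11 * σ22 := by
    have := sq_lt_sq' ht0.1 ht0.2
    rwa [hb2] at this
  have hu : 0 < σ22 - t0 ^ 2 / σ11 := by
    have : t0 ^ 2 / σ11 < σ22 := by rw [div_lt_iff₀ h11]; linarith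
    linarith
  have hne : σ22 - t0 ^ 2 / σ11 ≠ 0 := ne_of_gt hu
  have hden : (2:ℝ) * (σ22 - t0 ^ 2 / σ11) ≠ 0 := by positivity
  -- derivative pieces
  have hU : HasDerivAt (fun t : ℝ => σ22 - t ^ 2 / σ11) (-(2 * t0) / σ11) t0 := by
    have := ((hasDerivAt_pow 2 t0).div_const σ11).const_sub σ22
    simpa [neg_div] using this
  have hL : HasDerivAt (fun t : ℝ => Real.log (σ22 - t ^ 2 / σ11))
      ((-(2 * t0) / σ11) / (σ22 - t0 ^ 2 / σ11)) t0 := hU.log hne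
  have hq1 : HasDerivAt (fun t : ℝ => 2 * (t / σ11) * s12) (2 * (1 / σ11) * s12) t0 :=
    (((hasDerivAt_id t0).div_const σ11).const_mul 2).mul_const s12
  have hq2 : HasDerivAt (fun t : ℝ => t ^ 2 / σ11 ^ 2 * s11) (2 * t0 / σ11 ^ 2 * s11) t0 := by
    have := ((hasDerivAt_pow 2 t0).div_const (σ11 ^ 2)).mul_const s11
    simpa using this
  have hQ : HasDerivAt (fun t : ℝ => s22 - 2 * (t / σ11) * s12 + t ^ 2 / σ11 ^ 2 * s11)
      (-(2 * (1 / σ11) * s12) + 2 * t0 / σ11 ^ 2 * s11) t0 := (hq1.const_sub s22).add hq2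
  have hD : HasDerivAt (fun t : ℝ => 2 * (σ22 - t ^ 2 / σ11)) (2 * (-(2 * t0) / σ11)) t0 :=
    hU.const_mul 2
  have hfrac := hQ.div hD hden
  have hEta : HasDerivAt (eta σ11 σ22 s11 s22 s12 A C)
      (-(A / 2 * ((-(2 * t0) / σ11) / (σ22 - t0 ^ 2 / σ11)))
        - ((-(2 * (1 / σ11) * s12) + 2 * t0 / σ11 ^ 2 * s11) * (2 * (σ22 - t0 ^ 2 / σ11))
            - (s22 - 2 * (t0 / σ11) * s12 + t0 ^ 2 / σ11 ^ 2 * s11) * (2 * (-(2 * t0) / σ11)))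
          / (2 * (σ22 - t0 ^ 2 / σ11)) ^ 2) t0 := by
    exact ((hL.const_mul (A / 2)).const_sub C).sub hfrac
  have hloc : IsLocalMax (eta σ11 σ22 s11 s22 s12 A C) t0 := by
    filter_upwards [isOpen_Ioo.mem_nhds ht0] with t ht
    exact hmax t ht
  have hD0 := hloc.hasDerivAt_eq_zero hEta
  have hne2 : σ11 * σ22 - t0 ^ 2 ≠ 0 := by nlinarith
  have hDP : (-(A / 2 * ((-(2 * t0) / σ11) / (σ22 - t0 ^ 2 / σ11)))
        - ((-(2 * (1 / σ11) * s12) + 2 * t0 / σ11 ^ 2 * s11) * (2 * (σ22 - t0 ^ 2 / σ11))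
            - (s22 - 2 * (t0 / σ11) * s12 + t0 ^ 2 / σ11 ^ 2 * s11) * (2 * (-(2 * t0) / σ11)))
          / (2 * (σ22 - t0 ^ 2 / σ11)) ^ 2)
      = (s12 * σ11 * σ22 + (σ11 * σ22 * A - s22 * σ11 - s11 * σ22) * t0
          + s12 * t0 ^ 2 - A * t0 ^ 3) / (σ11 * σ22 - t0 ^ 2) ^ 2 := by
    have hrw : σ22 - t0 ^ 2 / σ11 = (σ11 * σ22 - t0 ^ 2) / σ11 := by
      rw [eq_div_iff (ne_of_gt h11), sub_mul, div_mul_cancel₀ _ (ne_of_gt h11)]; ring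

    rw [hrw]
    field_simp
    ring
  rw [hDP, div_eq_zero_iff] at hD0
  exact hD0.resolve_right (pow_ne_zero 2 hne2)


/-- Main claim of Theorems 2 and 4 of the DPER paper: the profile log-likelihood `η`
attains a global maximum inside the open interval `(−√(σ11·σ22), √(σ11·σ22))`, and every
global maximum point is a real root of the cubic polynomial `P`. -/
theorem eta_global_max_is_root_of_cubic
    (σ11 σ22 s11 s22 s12 A C : ℝ) (h11 : 0 < σ11) (h22 : 0 < σ22)
    (hs11 : 0 ≤ s11) (hs22 : 0 ≤ s22) (hcs : s12 ^ 2 ≤ s11 * s22) (hA : 0 ≤ A)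
    (hstar1 : s12 ≠ (s22 * σ11 + s11 * σ22) / (2 * Real.sqrt (σ11 * σ22)))
    (hstar2 : s12 ≠ -((s22 * σ11 + s11 * σ22) / (2 * Real.sqrt (σ11 * σ22)))) :
    (∃ tstar ∈ Set.Ioo (-Real.sqrt (σ11 * σ22)) (Real.sqrt (σ11 * σ22)),
      ∀ t ∈ Set.Ioo (-Real.sqrt (σ11 * σ22)) (Real.sqrt (σ11 * σ22)),
        (C - A / 2 * Real.log (σ22 - t ^ 2 / σ11)
            - (s22 - 2 * (t / σ11) * s12 + t ^ 2 / σ11 ^ 2 * s11)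
              / (2 * (σ22 - t ^ 2 / σ11)))
          ≤ C - A / 2 * Real.log (σ22 - tstar ^ 2 / σ11)
            - (s22 - 2 * (tstar / σ11) * s12 + tstar ^ 2 / σ11 ^ 2 * s11)
              / (2 * (σ22 - tstar ^ 2 / σ11))) ∧
    (∀ tstar ∈ Set.Ioo (-Real.sqrt (σ11 * σ22)) (Real.sqrt (σ11 * σ22)),
      (∀ t ∈ Set.Ioo (-Real.sqrt (σ11 * σ22)) (Real.sqrt (σ11 * σ22)),
        (C - A / 2 * Real.log (σ22 - t ^ 2 / σ11)
            - (s22 - 2 * (t / σ11) * s12 + t ^ 2 / σ11 ^ 2 * s11)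
              / (2 * (σ22 - t ^ 2 / σ11)))
          ≤ C - A / 2 * Real.log (σ22 - tstar ^ 2 / σ11)
            - (s22 - 2 * (tstar / σ11) * s12 + tstar ^ 2 / σ11 ^ 2 * s11)
              / (2 * (σ22 - tstar ^ 2 / σ11))) →
      s12 * σ11 * σ22 + (σ11 * σ22 * A - s22 * σ11 - s11 * σ22) * tstar
          + s12 * tstar ^ 2 - A * tstar ^ 3 = 0) := by
  exact ⟨eta_exists_max σ11 σ22 s11 s22 s12 A C h11 h22 hs11 hs22 hcs hA hstar1 hstar2,
    eta_max_root σ11 σ22 s11 s22 s12 A C h11 h22⟩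
end

section
/- Fix real numbers σ11 > 0, σ22 > 0, s11 ≥ 0, s22 ≥ 0, s12 with s12² ≤ s11·s22, and A ≥ 0, and assume the nondegeneracy condition (★): s12 ≠ (s22·σ11 + s11·σ22)/(2√(σ11·σ22)) and s12 ≠ −(s22·σ11 + s11·σ22)/(2√(σ11·σ22)). Then the polynomial P(t) = s12·σ11·σ22 + (σ11·σ22·A − s22·σ11 − s11·σ22)·t + s12·t² − A·t³ has at least one real root, and moreover has a root in the open interval (−√(σ11·σ22), √(σ11·σ22)). -/
open Real

/-- The cubic polynomial `P` of Theorems 2 and 4 of the DPER paper has at least one real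
root, and moreover has a root in the open interval `(−√(σ11·σ22), √(σ11·σ22))`. -/
theorem cubic_has_root
    (σ11 σ22 s11 s22 s12 A : ℝ) (h11 : 0 < σ11) (h22 : 0 < σ22)
    (hs11 : 0 ≤ s11) (hs22 : 0 ≤ s22) (hcs : s12 ^ 2 ≤ s11 * s22) (hA : 0 ≤ A)
    (hstar1 : s12 ≠ (s22 * σ11 + s11 * σ22) / (2 * Real.sqrt (σ11 * σ22)))
    (hstar2 : s12 ≠ -((s22 * σ11 + s11 * σ22) / (2 * Real.sqrt (σ11 * σ22)))) :
    (∃ t : ℝ, s12 * σ11 * σ22 + (σ11 * σ22 * A - s22 * σ11 - s11 * σ22) * t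
        + s12 * t ^ 2 - A * t ^ 3 = 0) ∧
    (∃ t ∈ Set.Ioo (-Real.sqrt (σ11 * σ22)) (Real.sqrt (σ11 * σ22)),
      s12 * σ11 * σ22 + (σ11 * σ22 * A - s22 * σ11 - s11 * σ22) * t
        + s12 * t ^ 2 - A * t ^ 3 = 0) := by
  set c := Real.sqrt (σ11 * σ22) with hcdef
  have hc : 0 < c := Real.sqrt_pos.mpr (mul_pos h11 h22)
  have hc2 : c ^ 2 = σ11 * σ22 := Real.sq_sqrt (mul_pos h11 h22).le
  set K := s22 * σ11 + s11 * σ22 with hKdef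
  have hK0 : 0 ≤ K := by positivity
  -- weak bound: (2 s12 c)^2 ≤ K^2
  have hsq : (2 * s12 * c) ^ 2 ≤ K ^ 2 := by
    nlinarith [sq_nonneg (s22 * σ11 - s11 * σ22), mul_pos h11 h22, hcs, hc2]
  have hle1 : 2 * s12 * c ≤ K := by nlinarith [hsq, hK0]
  have hle2 : -K ≤ 2 * s12 * c := by nlinarith [hsq, hK0]
  have hne1 : 2 * s12 * c ≠ K := by
    intro h
    apply hstar1
    rw [eq_div_iff (by positivity : 2 * c ≠ 0)]
    linarith
  have hne2 : 2 * s12 * c ≠ -K := by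
    intro h
    apply hstar2
    field_simp
    linarith
  have hlt1 : 2 * s12 * c < K := lt_of_le_of_ne hle1 hne1
  have hlt2 : -K < 2 * s12 * c := lt_of_le_of_ne hle2 (Ne.symm hne2)
  set f : ℝ → ℝ := fun t => s12 * σ11 * σ22 + (σ11 * σ22 * A - s22 * σ11 - s11 * σ22) * t
      + s12 * t ^ 2 - A * t ^ 3 with hf
  have hfc : f c = c * (2 * s12 * c - K) := by
    simp only [hf, hKdef]
    linear_combination (s12 + A * c) * hc2.symm
  have hfnc : f (-c) = c * (2 * s12 * c + K) := by
    simp only [hf, hKdef]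
    linear_combination (s12 - A * c) * hc2.symm
  have hfcneg : f c < 0 := by
    rw [hfc]; exact mul_neg_of_pos_of_neg hc (by linarith)
  have hfncpos : 0 < f (-c) := by
    rw [hfnc]; exact mul_pos hc (by linarith)
  have hcont : ContinuousOn f (Set.Icc (-c) c) := by
    apply Continuous.continuousOn; fun_prop
  have hmem : (0 : ℝ) ∈ Set.Ioo (f c) (f (-c)) := ⟨hfcneg, hfncpos⟩
  obtain ⟨t, ht, hft⟩ := intermediate_value_Ioo' (by linarith : -c ≤ c) hcont hmem
  exact ⟨⟨t, hft⟩, ⟨t, ht, hft⟩⟩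
end
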